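/- Let G be a graph decomposable into non-empty graphs G₁ and G₂, i.e. V(G) is the disjoint union of V(G₁) and V(G₂), the induced subgraphs on these sets are G₁ and G₂, and every vertex of G₁ is adjacent in G to every vertex of G₂. Then G is double-critical if and only if both G₁ and G₂ are double-critical. -/

import Mathlib

open SimpleGraph

/-- A graph is vertex-critical if deleting any vertex decreases the chromatic number. -/
def VertexCritical {V : Type} (G : SimpleGraph V) : Prop :=
  ∀ v : V, (G.induce ({v}ᶜ : Set V)).chromaticNumber < G.chromaticNumber

/-- A vertex-critical graph is double-critical if deleting the two end-vertices of any
edge decreases the chromatic number by at least two. -/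
def DoubleCritical {V : Type} (G : SimpleGraph V) : Prop :=
  VertexCritical G ∧
  ∀ x y : V, G.Adj x y →
    (G.induce ({x, y}ᶜ : Set V)).chromaticNumber + 2 ≤ G.chromaticNumber

section Aux

variable {V W : Type*}

lemma chrom_iso {G : SimpleGraph V} {H : SimpleGraph W} (e : G ≃g H) :
    G.chromaticNumber = H.chromaticNumber :=
  le_antisymm (chromaticNumber_mono_of_hom e.toEmbedding.toHom)
    (chromaticNumber_mono_of_hom e.symm.toEmbedding.toHom)

/-- Induce of induce is isomorphic to induce on the image. -/
noncomputable def induceInduceIso (G : SimpleGraph V) (A : Set V) (B : Set A) :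
    (G.induce A).induce B ≃g G.induce (Subtype.val '' B) where
  toEquiv := Equiv.Set.image Subtype.val B Subtype.val_injective
  map_rel_iff' := Iff.rfl

lemma chrom_induce_induce (G : SimpleGraph V) (A : Set V) (B : Set A) :
    ((G.induce A).induce B).chromaticNumber = (G.induce (Subtype.val '' B)).chromaticNumber :=
  chrom_iso (induceInduceIso G A B)

/-- Chromatic number of a join is the sum of chromatic numbers. -/
lemma join_chrom [Fintype V] (G : SimpleGraph V) (s : Set V)
    (hjoin : ∀ u ∈ s, ∀ v ∈ sᶜ, G.Adj u v) :
    G.chromaticNumber = (G.induce s).chromaticNumber + (G.induce sᶜ).chromaticNumber := by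
  classical
  have fs : Fintype ↥s := Fintype.ofFinite _
  have fsc : Fintype ↥(sᶜ) := Fintype.ofFinite _
  have hne1 : (G.induce s).chromaticNumber ≠ ⊤ :=
    chromaticNumber_ne_top_iff_exists.mpr ⟨_, (G.induce s).colorable_of_fintype⟩
  have hne2 : (G.induce sᶜ).chromaticNumber ≠ ⊤ :=
    chromaticNumber_ne_top_iff_exists.mpr ⟨_, (G.induce sᶜ).colorable_of_fintype⟩
  have hne : G.chromaticNumber ≠ ⊤ :=
    chromaticNumber_ne_top_iff_exists.mpr ⟨_, G.colorable_of_fintype⟩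
  set n₁ := (G.induce s).chromaticNumber.toNat with hn₁def
  set n₂ := (G.induce sᶜ).chromaticNumber.toNat with hn₂def
  set n := G.chromaticNumber.toNat with hndef
  have h₁ : (n₁ : ℕ∞) = (G.induce s).chromaticNumber := ENat.coe_toNat hne1
  have h₂ : (n₂ : ℕ∞) = (G.induce sᶜ).chromaticNumber := ENat.coe_toNat hne2
  have hcn : (n : ℕ∞) = G.chromaticNumber := ENat.coe_toNat hne
  obtain ⟨C₁⟩ := (G.induce s).colorable_chromaticNumber_of_fintype
  obtain ⟨C₂⟩ := (G.induce sᶜ).colorable_chromaticNumber_of_fintype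
  obtain ⟨C⟩ := G.colorable_chromaticNumber_of_fintype
  -- upper bound
  have hcol : G.Colorable (n₁ + n₂) := by
    have Cjoin : G.Coloring (Fin n₁ ⊕ Fin n₂) := by
      refine Coloring.mk
        (fun v => if h : v ∈ s then Sum.inl (C₁ ⟨v, h⟩) else Sum.inr (C₂ ⟨v, h⟩)) ?_
      intro a b hab
      by_cases ha : a ∈ s <;> by_cases hb : b ∈ s <;> simp [ha, hb]
      · exact C₁.valid hab
      · exact C₂.valid hab
    simpa using Cjoin.colorable
  -- lower bound
  set A : Set (Fin n) := (fun v => C v) '' s with hAdef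
  set B : Set (Fin n) := (fun v => C v) '' sᶜ with hBdef
  have hdisj : Disjoint A B := by
    rw [Set.disjoint_left]
    rintro a ⟨u, hu, rfl⟩ ⟨v, hv, hva⟩
    exact C.valid (hjoin u hu v hv) hva.symm
  have hA : (G.induce s).Colorable A.ncard := by
    have : Fintype ↥A := Fintype.ofFinite _
    have CA : (G.induce s).Coloring ↥A :=
      Coloring.mk (fun u => ⟨C u.1, ⟨u.1, u.2, rfl⟩⟩)
        (fun hab h => C.valid hab (congrArg Subtype.val h))
    rw [← Nat.card_coe_set_eq, Nat.card_eq_fintype_card]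
    exact CA.colorable
  have hB : (G.induce sᶜ).Colorable B.ncard := by
    have : Fintype ↥B := Fintype.ofFinite _
    have CB : (G.induce sᶜ).Coloring ↥B :=
      Coloring.mk (fun u => ⟨C u.1, ⟨u.1, u.2, rfl⟩⟩)
        (fun hab h => C.valid hab (congrArg Subtype.val h))
    rw [← Nat.card_coe_set_eq, Nat.card_eq_fintype_card]
    exact CB.colorable
  have hn₁ : n₁ ≤ A.ncard := by
    have := hA.chromaticNumber_le
    rw [← h₁, Nat.cast_le] at this
    exact this
  have hn₂ : n₂ ≤ B.ncard := by
    have := hB.chromaticNumber_le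
    rw [← h₂, Nat.cast_le] at this
    exact this
  have hUB : A.ncard + B.ncard ≤ n := by
    calc A.ncard + B.ncard = (A ∪ B).ncard :=
          (Set.ncard_union_eq hdisj (Set.toFinite _) (Set.toFinite _)).symm
      _ ≤ (Set.univ : Set (Fin n)).ncard :=
          Set.ncard_le_ncard (Set.subset_univ _) Set.finite_univ
      _ = n := by simp [Set.ncard_univ]
  refine le_antisymm ?_ ?_
  · calc G.chromaticNumber ≤ ((n₁ + n₂ : ℕ) : ℕ∞) := hcol.chromaticNumber_le
      _ = _ := by rw [Nat.cast_add, h₁, h₂]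
  · rw [← h₁, ← h₂, ← hcn, ← Nat.cast_add, Nat.cast_le]
    exact le_trans (Nat.add_le_add hn₁ hn₂) hUB

/-- Key decomposition: removing a set of vertices from a join. -/
lemma key_chrom [Fintype V] (G : SimpleGraph V) (s : Set V)
    (hjoin : ∀ u ∈ s, ∀ v ∈ sᶜ, G.Adj u v) (X : Set V) :
    (G.induce Xᶜ).chromaticNumber =
      (G.induce (s ∩ Xᶜ)).chromaticNumber + (G.induce (sᶜ ∩ Xᶜ)).chromaticNumber := by
  classical
  have h := join_chrom (G.induce Xᶜ) (Subtype.val ⁻¹' s) ?_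
  · rw [h, chrom_induce_induce, chrom_induce_induce]
    have e1 : (Subtype.val '' (Subtype.val ⁻¹' s : Set ↥(Xᶜ))) = s ∩ Xᶜ := by
      rw [Set.image_preimage_eq_inter_range, Subtype.range_coe, Set.inter_comm]
    have e2 : (Subtype.val '' ((Subtype.val ⁻¹' s : Set ↥(Xᶜ))ᶜ)) = sᶜ ∩ Xᶜ := by
      rw [← Set.preimage_compl, Set.image_preimage_eq_inter_range, Subtype.range_coe,
        Set.inter_comm]
    rw [e1, e2]
  · rintro u hu v hv
    exact hjoin u.1 hu v.1 hv

lemma chrom_induce_congr (G : SimpleGraph V) {A B : Set V} (h : A = B) :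
    (G.induce A).chromaticNumber = (G.induce B).chromaticNumber := by rw [h]

end Aux

/-- Let `G` be decomposable into the non-empty induced subgraphs `G₁ = G[s]` and
`G₂ = G[sᶜ]`, i.e. every vertex of `s` is adjacent in `G` to every vertex of `sᶜ`.
Then `G` is double-critical if and only if both `G₁` and `G₂` are double-critical. -/
theorem stmt12 {V : Type} [Fintype V] (G : SimpleGraph V) (s : Set V)
    (hs : s.Nonempty) (hsc : sᶜ.Nonempty)
    (hjoin : ∀ u ∈ s, ∀ v ∈ sᶜ, G.Adj u v) :
    DoubleCritical G ↔ DoubleCritical (G.induce s) ∧ DoubleCritical (G.induce sᶜ) := by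
  classical
  have fs : Fintype ↥s := Fintype.ofFinite _
  have fsc : Fintype ↥(sᶜ) := Fintype.ofFinite _
  have hne1 : (G.induce s).chromaticNumber ≠ ⊤ :=
    chromaticNumber_ne_top_iff_exists.mpr ⟨_, (G.induce s).colorable_of_fintype⟩
  have hne2 : (G.induce sᶜ).chromaticNumber ≠ ⊤ :=
    chromaticNumber_ne_top_iff_exists.mpr ⟨_, (G.induce sᶜ).colorable_of_fintype⟩
  have hG : G.chromaticNumber =
      (G.induce s).chromaticNumber + (G.induce sᶜ).chromaticNumber := join_chrom G s hjoin
  -- vertex deletion, v ∈ s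
  have hv1 : ∀ w : ↥s, (G.induce ({(w : V)}ᶜ : Set V)).chromaticNumber =
      ((G.induce s).induce ({w}ᶜ : Set ↥s)).chromaticNumber +
        (G.induce sᶜ).chromaticNumber := by
    intro w
    have e1 : sᶜ ∩ ({(w : V)}ᶜ : Set V) = sᶜ := by
      ext u
      constructor
      · rintro ⟨hu, _⟩; exact hu
      · intro hu; exact ⟨hu, fun he => hu (by rw [he]; exact w.2)⟩
    have e2 : s ∩ ({(w : V)}ᶜ : Set V) = Subtype.val '' ({w}ᶜ : Set ↥s) := by
      ext u
      constructor
      · rintro ⟨hu, hne⟩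
        exact ⟨⟨u, hu⟩, fun he => hne (congrArg Subtype.val he), rfl⟩
      · rintro ⟨a, ha, rfl⟩
        exact ⟨a.2, fun he => ha (Subtype.ext he)⟩
    rw [key_chrom G s hjoin {(w : V)}, chrom_induce_congr G e1, chrom_induce_congr G e2,
      ← chrom_induce_induce]
  -- vertex deletion, v ∈ sᶜ
  have hv2 : ∀ w : ↥(sᶜ), (G.induce ({(w : V)}ᶜ : Set V)).chromaticNumber =
      (G.induce s).chromaticNumber +
        ((G.induce sᶜ).induce ({w}ᶜ : Set ↥(sᶜ))).chromaticNumber := by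
    intro w
    have e1 : s ∩ ({(w : V)}ᶜ : Set V) = s := by
      ext u
      constructor
      · rintro ⟨hu, _⟩; exact hu
      · intro hu; exact ⟨hu, fun he => w.2 (by rw [← he]; exact hu)⟩
    have e2 : sᶜ ∩ ({(w : V)}ᶜ : Set V) = Subtype.val '' ({w}ᶜ : Set ↥(sᶜ)) := by
      ext u
      constructor
      · rintro ⟨hu, hne⟩
        exact ⟨⟨u, hu⟩, fun he => hne (congrArg Subtype.val he), rfl⟩
      · rintro ⟨a, ha, rfl⟩
        exact ⟨a.2, fun he => ha (Subtype.ext he)⟩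
    rw [key_chrom G s hjoin {(w : V)}, chrom_induce_congr G e1, chrom_induce_congr G e2,
      ← chrom_induce_induce]
  -- pair deletion, both in s
  have hp1 : ∀ w₁ w₂ : ↥s, (G.induce ({(w₁ : V), (w₂ : V)}ᶜ : Set V)).chromaticNumber =
      ((G.induce s).induce ({w₁, w₂}ᶜ : Set ↥s)).chromaticNumber +
        (G.induce sᶜ).chromaticNumber := by
    intro w₁ w₂
    have e1 : sᶜ ∩ ({(w₁ : V), (w₂ : V)}ᶜ : Set V) = sᶜ := by
      ext u
      constructor
      · rintro ⟨hu, _⟩; exact hu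
      · intro hu
        refine ⟨hu, ?_⟩
        rintro (he | he)
        · exact hu (by rw [he]; exact w₁.2)
        · exact hu (by rw [he]; exact w₂.2)
    have e2 : s ∩ ({(w₁ : V), (w₂ : V)}ᶜ : Set V) =
        Subtype.val '' ({w₁, w₂}ᶜ : Set ↥s) := by
      ext u
      constructor
      · rintro ⟨hu, hne⟩
        refine ⟨⟨u, hu⟩, ?_, rfl⟩
        rintro (he | he)
        · exact hne (Or.inl (congrArg Subtype.val he))
        · exact hne (Or.inr (congrArg Subtype.val he))
      · rintro ⟨a, ha, rfl⟩
        refine ⟨a.2, ?_⟩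
        rintro (he | he)
        · exact ha (Or.inl (Subtype.ext he))
        · exact ha (Or.inr (Subtype.ext he))
    rw [key_chrom G s hjoin {(w₁ : V), (w₂ : V)}, chrom_induce_congr G e1,
      chrom_induce_congr G e2, ← chrom_induce_induce]
  -- pair deletion, both in sᶜ
  have hp2 : ∀ w₁ w₂ : ↥(sᶜ), (G.induce ({(w₁ : V), (w₂ : V)}ᶜ : Set V)).chromaticNumber =
      (G.induce s).chromaticNumber +
        ((G.induce sᶜ).induce ({w₁, w₂}ᶜ : Set ↥(sᶜ))).chromaticNumber := by
    intro w₁ w₂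
    have e1 : s ∩ ({(w₁ : V), (w₂ : V)}ᶜ : Set V) = s := by
      ext u
      constructor
      · rintro ⟨hu, _⟩; exact hu
      · intro hu
        refine ⟨hu, ?_⟩
        rintro (he | he)
        · exact w₁.2 (by rw [← he]; exact hu)
        · exact w₂.2 (by rw [← he]; exact hu)
    have e2 : sᶜ ∩ ({(w₁ : V), (w₂ : V)}ᶜ : Set V) =
        Subtype.val '' ({w₁, w₂}ᶜ : Set ↥(sᶜ)) := by
      ext u
      constructor
      · rintro ⟨hu, hne⟩
        refine ⟨⟨u, hu⟩, ?_, rfl⟩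
        rintro (he | he)
        · exact hne (Or.inl (congrArg Subtype.val he))
        · exact hne (Or.inr (congrArg Subtype.val he))
      · rintro ⟨a, ha, rfl⟩
        refine ⟨a.2, ?_⟩
        rintro (he | he)
        · exact ha (Or.inl (Subtype.ext he))
        · exact ha (Or.inr (Subtype.ext he))
    rw [key_chrom G s hjoin {(w₁ : V), (w₂ : V)}, chrom_induce_congr G e1,
      chrom_induce_congr G e2, ← chrom_induce_induce]
  -- pair deletion, cross
  have hpx : ∀ (w₁ : ↥s) (w₂ : ↥(sᶜ)),
      (G.induce ({(w₁ : V), (w₂ : V)}ᶜ : Set V)).chromaticNumber =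
      ((G.induce s).induce ({w₁}ᶜ : Set ↥s)).chromaticNumber +
        ((G.induce sᶜ).induce ({w₂}ᶜ : Set ↥(sᶜ))).chromaticNumber := by
    intro w₁ w₂
    have e1 : s ∩ ({(w₁ : V), (w₂ : V)}ᶜ : Set V) =
        Subtype.val '' ({w₁}ᶜ : Set ↥s) := by
      ext u
      constructor
      · rintro ⟨hu, hne⟩
        exact ⟨⟨u, hu⟩, fun he => hne (Or.inl (congrArg Subtype.val he)), rfl⟩
      · rintro ⟨a, ha, rfl⟩
        refine ⟨a.2, ?_⟩
        rintro (he | he)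
        · exact ha (Subtype.ext he)
        · exact w₂.2 (by rw [← he]; exact a.2)
    have e2 : sᶜ ∩ ({(w₁ : V), (w₂ : V)}ᶜ : Set V) =
        Subtype.val '' ({w₂}ᶜ : Set ↥(sᶜ)) := by
      ext u
      constructor
      · rintro ⟨hu, hne⟩
        exact ⟨⟨u, hu⟩, fun he => hne (Or.inr (congrArg Subtype.val he)), rfl⟩
      · rintro ⟨a, ha, rfl⟩
        refine ⟨a.2, ?_⟩
        rintro (he | he)
        · exact a.2 (by rw [he]; exact w₁.2)
        · exact ha (Subtype.ext he)
    rw [key_chrom G s hjoin {(w₁ : V), (w₂ : V)}, chrom_induce_congr G e1,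
      chrom_induce_congr G e2, ← chrom_induce_induce, ← chrom_induce_induce]
  constructor
  · rintro ⟨hvc, hec⟩
    refine ⟨⟨fun w => ?_, fun x y hxy => ?_⟩, ⟨fun w => ?_, fun x y hxy => ?_⟩⟩
    · have h := hvc (w : V)
      rw [hv1 w, hG, ENat.add_lt_add_iff_right hne2] at h
      exact h
    · have h := hec (x : V) (y : V) hxy
      rw [hp1 x y, hG, add_right_comm] at h
      exact (WithTop.add_le_add_iff_right hne2).mp h
    · have h := hvc (w : V)
      rw [hv2 w, hG, ENat.add_lt_add_iff_left hne1] at h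
      exact h
    · have h := hec (x : V) (y : V) hxy
      rw [hp2 x y, hG, add_assoc] at h
      exact (WithTop.add_le_add_iff_left hne1).mp h
  · rintro ⟨⟨hvc1, hec1⟩, ⟨hvc2, hec2⟩⟩
    refine ⟨fun v => ?_, fun x y hxy => ?_⟩
    · by_cases hv : v ∈ s
      · have h := hvc1 ⟨v, hv⟩
        rw [hG, show v = ((⟨v, hv⟩ : ↥s) : V) from rfl, hv1 ⟨v, hv⟩,
          ENat.add_lt_add_iff_right hne2]
        exact h
      · have h := hvc2 ⟨v, hv⟩
        rw [hG, show v = ((⟨v, hv⟩ : ↥(sᶜ)) : V) from rfl, hv2 ⟨v, hv⟩,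
          ENat.add_lt_add_iff_left hne1]
        exact h
    · by_cases hx : x ∈ s <;> by_cases hy : y ∈ s
      · have h := hec1 ⟨x, hx⟩ ⟨y, hy⟩ hxy
        rw [hG, show x = ((⟨x, hx⟩ : ↥s) : V) from rfl,
          show y = ((⟨y, hy⟩ : ↥s) : V) from rfl, hp1 ⟨x, hx⟩ ⟨y, hy⟩, add_right_comm]
        exact add_le_add_left h _
      · have h1 := hvc1 ⟨x, hx⟩
        have h2 := hvc2 ⟨y, hy⟩
        rw [hG, show x = ((⟨x, hx⟩ : ↥s) : V) from rfl,
          show y = ((⟨y, hy⟩ : ↥(sᶜ)) : V) from rfl, hpx ⟨x, hx⟩ ⟨y, hy⟩]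
        have h1' := (ENat.add_one_le_iff h1.ne_top).mpr h1
        have h2' := (ENat.add_one_le_iff h2.ne_top).mpr h2
        have := add_le_add h1' h2'
        rwa [← add_add_add_comm, one_add_one_eq_two] at this
      · have h1 := hvc1 ⟨y, hy⟩
        have h2 := hvc2 ⟨x, hx⟩
        rw [hG, Set.pair_comm, show y = ((⟨y, hy⟩ : ↥s) : V) from rfl,
          show x = ((⟨x, hx⟩ : ↥(sᶜ)) : V) from rfl, hpx ⟨y, hy⟩ ⟨x, hx⟩]
        have h1' := (ENat.add_one_le_iff h1.ne_top).mpr h1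
        have h2' := (ENat.add_one_le_iff h2.ne_top).mpr h2
        have := add_le_add h1' h2'
        rwa [← add_add_add_comm, one_add_one_eq_two] at this
      · have h := hec2 ⟨x, hx⟩ ⟨y, hy⟩ hxy
        rw [hG, show x = ((⟨x, hx⟩ : ↥(sᶜ)) : V) from rfl,
          show y = ((⟨y, hy⟩ : ↥(sᶜ)) : V) from rfl, hp2 ⟨x, hx⟩ ⟨y, hy⟩, add_assoc]
        exact add_le_add_right h _
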